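/- For every integer k > 1 and every integer n ≡ 2 (mod 6) with n > 2, (k^2 - k + 1) divides (k^n - k + 1), and hence k^n - k + 1 is composite. -/
import Mathlib

theorem stmt_16 (k n : ℕ) (hk : 1 < k) (hn : n % 6 = 2) (hn2 : 2 < n) :
    (k ^ 2 - k + 1) ∣ (k ^ n - k + 1) ∧ ¬ (k ^ n - k + 1).Prime := by
  obtain ⟨m, hm⟩ : ∃ m, n = 6 * m + 2 := ⟨n / 6, by omega⟩
  have hk1 : 1 ≤ k := hk.le
  have hk2 : k ≤ k ^ 2 := Nat.le_self_pow two_ne_zero k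
  have hkn : k ≤ k ^ n := Nat.le_self_pow (by omega) k
  set K : ℤ := (k : ℤ) with hK
  have hdvdZ : (K ^ 2 - K + 1) ∣ (K ^ n - K + 1) := by
    have h6 : (K ^ 2 - K + 1) ∣ (K ^ 6 - 1) := ⟨(K + 1) * (K ^ 3 - 1), by ring⟩
    have h6m : (K ^ 6 - 1) ∣ ((K ^ 6) ^ m - 1 ^ m) := sub_dvd_pow_sub_pow _ _ _
    have key : (K ^ 2 - K + 1) ∣ (K ^ n - K ^ 2) := by
      have : K ^ n - K ^ 2 = K ^ 2 * ((K ^ 6) ^ m - 1 ^ m) := by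
        rw [hm]; ring
      rw [this]
      exact Dvd.dvd.mul_left (h6.trans h6m) _
    have : K ^ n - K + 1 = (K ^ n - K ^ 2) + (K ^ 2 - K + 1) := by ring
    rw [this]
    exact dvd_add key dvd_rfl
  have hdvd : (k ^ 2 - k + 1) ∣ (k ^ n - k + 1) := by
    have := hdvdZ
    rw [← Int.natCast_dvd_natCast]
    push_cast [hk2, hkn]
    exact this
  refine ⟨hdvd, fun hp => ?_⟩
  have hkk : k < k ^ 2 := by nlinarith
  have h1 : k ^ 2 - k + 1 ≠ 1 := by omega
  have hlt : k ^ 2 - k + 1 < k ^ n - k + 1 := by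
    have : k ^ 2 < k ^ n := Nat.pow_lt_pow_right hk (by omega)
    omega
  rcases (Nat.Prime.eq_one_or_self_of_dvd hp _ hdvd) with h | h
  · exact h1 h
  · omega
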